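/- Let $f$ be $C^1$ with polynomially bounded gradient on $\mathbb{R}^d$ and $\int f\varphi = 0$ for the OU invariant measure $\varphi$. Then there exist $C > 0$ such that $|T_t f(0)| \le C e^{-2\mu t}$ for all $t \ge 1$. -/

import Mathlib

open MeasureTheory

theorem OU_aux_gauss_integrable {d : ℕ} {b : ℝ} (hb : 0 < b) :
    Integrable (fun v : EuclideanSpace ℝ (Fin d) => Real.exp (-b * ‖v‖ ^ 2)) := by
  have h := (GaussianFourier.integrable_cexp_neg_mul_sq_norm_add_of_euclideanSpace
      (b := (b : ℂ)) (by simpa using hb) 0 (0 : EuclideanSpace ℝ (Fin d))).norm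
  convert h using 2 with v
  simp [Complex.norm_exp, ← Complex.ofReal_pow]

theorem OU_aux_pow_gauss_integrable {d : ℕ} {c : ℝ} (hc : 0 < c) (k : ℕ) :
    Integrable (fun v : EuclideanSpace ℝ (Fin d) => ‖v‖ ^ k * Real.exp (-c * ‖v‖ ^ 2)) := by
  have hint := (OU_aux_gauss_integrable (d := d) (half_pos hc)).const_mul
    (Real.exp ((k : ℝ) ^ 2 / (2 * c)))
  refine hint.mono' ((Continuous.aestronglyMeasurable (by continuity))) ?_
  refine Filter.Eventually.of_forall fun v => ?_
  rw [Real.norm_eq_abs, abs_of_nonneg (by positivity)]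
  set r := ‖v‖ with hr_def
  have hr : 0 ≤ r := norm_nonneg v
  have h1 : r ^ k ≤ Real.exp ((k : ℝ) * r) := by
    calc r ^ k ≤ (Real.exp r) ^ k :=
          pow_le_pow_left₀ hr (by linarith [Real.add_one_le_exp r]) k
      _ = Real.exp ((k : ℝ) * r) := (Real.exp_nat_mul r k).symm
  calc r ^ k * Real.exp (-c * r ^ 2)
      ≤ Real.exp ((k : ℝ) * r) * Real.exp (-c * r ^ 2) :=
        mul_le_mul_of_nonneg_right h1 (Real.exp_nonneg _)
    _ = Real.exp ((k : ℝ) * r + -c * r ^ 2) := (Real.exp_add _ _).symm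
    _ ≤ Real.exp ((k : ℝ) ^ 2 / (2 * c) + -(c / 2) * r ^ 2) := by
        apply Real.exp_le_exp.2
        have h2 : 2 * c * ((k : ℝ) * r) ≤ (k : ℝ) ^ 2 + c ^ 2 * r ^ 2 := by
          nlinarith [sq_nonneg ((k : ℝ) - c * r)]
        have h3 : (k : ℝ) * r ≤ ((k : ℝ) ^ 2 + c ^ 2 * r ^ 2) / (2 * c) := by
          rw [le_div_iff₀ (by positivity)]; linarith
        have h4 : ((k : ℝ) ^ 2 + c ^ 2 * r ^ 2) / (2 * c)
            = (k : ℝ) ^ 2 / (2 * c) + (c / 2) * r ^ 2 := by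
          field_simp
        linarith
    _ = Real.exp ((k : ℝ) ^ 2 / (2 * c)) * Real.exp (-(c / 2) * r ^ 2) := Real.exp_add _ _

/-- Improved decay of the OU semigroup at the origin: for a centered `C¹` function `f`
with polynomially bounded gradient, `|T_t f (0)| ≤ C e^{-2 μ t}` for `t ≥ 1`. -/
theorem OU_semigroup_decay_at_origin
    {d : ℕ} (μ σ : ℝ) (hμ : 0 < μ) (hσ : 0 < σ)
    (φ : EuclideanSpace ℝ (Fin d) → ℝ)
    (hφ : ∀ y, φ y = (μ / (Real.pi * σ ^ 2)) ^ ((d : ℝ) / 2) *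
      Real.exp (-(μ / σ ^ 2) * ‖y‖ ^ 2))
    (T : ℝ → (EuclideanSpace ℝ (Fin d) → ℝ) → EuclideanSpace ℝ (Fin d) → ℝ)
    (hT : ∀ t f x, T t f x =
      ∫ y, f (Real.exp (-μ * t) • x + Real.sqrt (1 - Real.exp (-2 * μ * t)) • y) * φ y)
    (f : EuclideanSpace ℝ (Fin d) → ℝ)
    (hf1 : ContDiff ℝ 1 f)
    (hgrow : ∃ (C₀ : ℝ) (n : ℕ), ∀ x, |f x| ≤ C₀ * (1 + ‖x‖ ^ n))
    (hgrad : ∃ (C₁ : ℝ) (n₁ : ℕ), ∀ x, ‖fderiv ℝ f x‖ ≤ C₁ * (1 + ‖x‖ ^ n₁))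
    (hcentered : (∫ y, f y * φ y) = 0) :
    ∃ C > (0:ℝ), ∀ t ≥ (1:ℝ), |T t f 0| ≤ C * Real.exp (-2 * μ * t) := by
  obtain ⟨C₀, n, hC₀⟩ := hgrow
  obtain ⟨C₁, n₁, hC₁⟩ := hgrad
  set c : ℝ := μ / σ ^ 2 with hc_def
  have hc : 0 < c := div_pos hμ (by positivity)
  set A : ℝ := (μ / (Real.pi * σ ^ 2)) ^ ((d : ℝ) / 2) with hA_def
  have hA : 0 ≤ A := Real.rpow_nonneg (by positivity) _
  have hφpos : ∀ y, 0 ≤ φ y := fun y => by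
    rw [hφ y]; positivity
  have hgc : Continuous fun y : EuclideanSpace ℝ (Fin d) => Real.exp (-c * ‖y‖ ^ 2) :=
    Real.continuous_exp.comp (continuous_const.mul (continuous_norm.pow 2))
  have hφcont : Continuous φ := by
    have : φ = fun y => A * Real.exp (-c * ‖y‖ ^ 2) := funext fun y => hφ y
    rw [this]; exact continuous_const.mul hgc
  have hfc : Continuous f := hf1.continuous
  -- integrability of y ↦ f (s • y) * φ y for |s| ≤ 1
  have hint_f : ∀ s : ℝ, |s| ≤ 1 →
      Integrable (fun y : EuclideanSpace ℝ (Fin d) => f (s • y) * φ y) := by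
    intro s hs
    have hdom : Integrable (fun y : EuclideanSpace ℝ (Fin d) =>
        |C₀| * A * (Real.exp (-c * ‖y‖ ^ 2) + ‖y‖ ^ n * Real.exp (-c * ‖y‖ ^ 2))) :=
      ((OU_aux_gauss_integrable hc).add (OU_aux_pow_gauss_integrable hc n)).const_mul _
    refine hdom.mono' ((hfc.comp (continuous_const_smul s)).mul hφcont).aestronglyMeasurable ?_
    refine Filter.Eventually.of_forall fun y => ?_
    rw [Real.norm_eq_abs, abs_mul, abs_of_nonneg (hφpos y), hφ y]
    have h2 : ‖s • y‖ ≤ ‖y‖ := by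
      rw [norm_smul]
      calc ‖s‖ * ‖y‖ ≤ 1 * ‖y‖ :=
            mul_le_mul_of_nonneg_right (by rwa [Real.norm_eq_abs]) (norm_nonneg y)
        _ = ‖y‖ := one_mul _
    have h1 : |f (s • y)| ≤ |C₀| * (1 + ‖y‖ ^ n) := by
      calc |f (s • y)| ≤ C₀ * (1 + ‖s • y‖ ^ n) := hC₀ (s • y)
        _ ≤ |C₀| * (1 + ‖s • y‖ ^ n) :=
            mul_le_mul_of_nonneg_right (le_abs_self _) (by positivity)
        _ ≤ |C₀| * (1 + ‖y‖ ^ n) := by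
            have := pow_le_pow_left₀ (norm_nonneg _) h2 n
            have := abs_nonneg C₀
            nlinarith
    calc |f (s • y)| * (A * Real.exp (-c * ‖y‖ ^ 2))
        ≤ (|C₀| * (1 + ‖y‖ ^ n)) * (A * Real.exp (-c * ‖y‖ ^ 2)) :=
          mul_le_mul_of_nonneg_right h1 (by positivity)
      _ = |C₀| * A * (Real.exp (-c * ‖y‖ ^ 2) + ‖y‖ ^ n * Real.exp (-c * ‖y‖ ^ 2)) := by
          ring
  have hint_f1 : Integrable (fun y : EuclideanSpace ℝ (Fin d) => f y * φ y) := by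
    have := hint_f 1 (by norm_num)
    simpa using this
  have hint_h : Integrable (fun y : EuclideanSpace ℝ (Fin d) =>
      (‖y‖ + ‖y‖ ^ (n₁ + 1)) * Real.exp (-c * ‖y‖ ^ 2)) := by
    have := (OU_aux_pow_gauss_integrable (d := d) hc 1).add
      (OU_aux_pow_gauss_integrable (d := d) hc (n₁ + 1))
    simpa [add_mul, pow_one] using (show Integrable (fun v : EuclideanSpace ℝ (Fin d) => ‖v‖ ^ 1 * Real.exp (-c * ‖v‖ ^ 2) + ‖v‖ ^ (n₁ + 1) * Real.exp (-c * ‖v‖ ^ 2)) from this)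
  set K : ℝ := |C₁| * A * ∫ y : EuclideanSpace ℝ (Fin d),
      (‖y‖ + ‖y‖ ^ (n₁ + 1)) * Real.exp (-c * ‖y‖ ^ 2) with hK_def
  have hK : 0 ≤ K :=
    mul_nonneg (mul_nonneg (abs_nonneg _) hA) (integral_nonneg fun y => by positivity)
  refine ⟨K + 1, by linarith, fun t ht => ?_⟩
  set e : ℝ := Real.exp (-2 * μ * t) with he
  have hepos : 0 < e := Real.exp_pos _
  have he1 : e < 1 := by
    rw [he]
    apply Real.exp_lt_one_iff.2
    nlinarith
  set s : ℝ := Real.sqrt (1 - e) with hs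
  have hs0 : 0 ≤ s := Real.sqrt_nonneg _
  have hs1 : s ≤ 1 := by
    rw [hs]
    calc Real.sqrt (1 - e) ≤ Real.sqrt 1 := Real.sqrt_le_sqrt (by linarith)
      _ = 1 := Real.sqrt_one
  have hssq : s ^ 2 = 1 - e := Real.sq_sqrt (by linarith)
  have hse : 1 - s ≤ e := by nlinarith
  have hTt : T t f 0 = ∫ y, f (s • y) * φ y := by
    rw [hT, hs, he]
    simp only [smul_zero, zero_add]
  have key : T t f 0 = ∫ y, (f (s • y) - f y) * φ y := by
    have hsub : (∫ y, (f (s • y) - f y) * φ y)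
        = (∫ y, f (s • y) * φ y) - ∫ y, f y * φ y := by
      rw [← integral_sub (hint_f s (by rwa [abs_of_nonneg hs0])) hint_f1]
      congr 1; funext y; ring
    rw [hTt, hsub, hcentered, sub_zero]
  have hbound : |T t f 0| ≤ ∫ y : EuclideanSpace ℝ (Fin d), e * (|C₁| * A) *
      ((‖y‖ + ‖y‖ ^ (n₁ + 1)) * Real.exp (-c * ‖y‖ ^ 2)) := by
    rw [key]
    refine le_trans (le_of_eq (Real.norm_eq_abs _).symm)
      (norm_integral_le_of_norm_le (hint_h.const_mul _) ?_)
    refine Filter.Eventually.of_forall fun y => ?_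
    rw [Real.norm_eq_abs, abs_mul, abs_of_nonneg (hφpos y), hφ y]
    have hsy : s • y ∈ Metric.closedBall (0 : EuclideanSpace ℝ (Fin d)) ‖y‖ := by
      rw [Metric.mem_closedBall, dist_zero_right, norm_smul]
      calc ‖s‖ * ‖y‖ ≤ 1 * ‖y‖ :=
            mul_le_mul_of_nonneg_right (by rw [Real.norm_eq_abs, abs_of_nonneg hs0]; exact hs1)
              (norm_nonneg y)
        _ = ‖y‖ := one_mul _
    have hyy : y ∈ Metric.closedBall (0 : EuclideanSpace ℝ (Fin d)) ‖y‖ := by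
      rw [Metric.mem_closedBall, dist_zero_right]
    have hdiff : ‖f (s • y) - f y‖ ≤ (|C₁| * (1 + ‖y‖ ^ n₁)) * ‖s • y - y‖ := by
      refine (convex_closedBall _ _).norm_image_sub_le_of_norm_fderiv_le
        (fun x _ => (hf1.differentiable one_ne_zero) x) (fun x hx => ?_) hyy hsy
      have hxy : ‖x‖ ≤ ‖y‖ := by
        rwa [Metric.mem_closedBall, dist_zero_right] at hx
      calc ‖fderiv ℝ f x‖ ≤ C₁ * (1 + ‖x‖ ^ n₁) := hC₁ x
        _ ≤ |C₁| * (1 + ‖y‖ ^ n₁) := by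
            have h1 := pow_le_pow_left₀ (norm_nonneg x) hxy n₁
            have h2 := le_abs_self C₁
            have h3 := abs_nonneg C₁
            have h4 := pow_nonneg (norm_nonneg x) n₁
            nlinarith
    have hnorm : ‖s • y - y‖ = (1 - s) * ‖y‖ := by
      rw [show s • y - y = (s - 1) • y by rw [sub_smul, one_smul], norm_smul,
        Real.norm_eq_abs, abs_of_nonpos (by linarith), neg_sub]
    have hdiff2 : |f (s • y) - f y| ≤ (|C₁| * (1 + ‖y‖ ^ n₁)) * (e * ‖y‖) := by
      rw [← Real.norm_eq_abs]
      refine hdiff.trans ?_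
      rw [hnorm]
      have h5 : (1 - s) * ‖y‖ ≤ e * ‖y‖ := mul_le_mul_of_nonneg_right hse (norm_nonneg y)
      exact mul_le_mul_of_nonneg_left h5 (by positivity)
    calc |f (s • y) - f y| * (A * Real.exp (-c * ‖y‖ ^ 2))
        ≤ ((|C₁| * (1 + ‖y‖ ^ n₁)) * (e * ‖y‖)) * (A * Real.exp (-c * ‖y‖ ^ 2)) :=
          mul_le_mul_of_nonneg_right hdiff2 (by positivity)
      _ = e * (|C₁| * A) * ((‖y‖ + ‖y‖ ^ (n₁ + 1)) * Real.exp (-c * ‖y‖ ^ 2)) := by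
          ring
  rw [integral_const_mul] at hbound
  calc |T t f 0| ≤ e * (|C₁| * A) * ∫ y : EuclideanSpace ℝ (Fin d),
        (‖y‖ + ‖y‖ ^ (n₁ + 1)) * Real.exp (-c * ‖y‖ ^ 2) := hbound
    _ = e * K := by rw [hK_def]; ring
    _ ≤ (K + 1) * e := by nlinarith
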